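/- Let X ∈ R^{n×n} be a matrix of rank at most d, and let ‖X‖_* denote its nuclear norm, i.e., the sum of the singular values of X (equivalently, ‖X‖_* = Σ_i √(μ_i), where μ₁, …, μ_n are the eigenvalues of the positive semidefinite matrix Xᵀ X). Then ‖X‖_* equals the minimum over all pairs U ∈ R^{n×d}, V ∈ R^{n×d} with X = U Vᵀ of (1/2)·(‖U‖_F² + ‖V‖_F²), and this minimum is attained. -/

import Mathlib

open Matrix Finset

private lemma aux_sum_ite_mul {α β : Type*} [Fintype α] [Fintype β] [DecidableEq α]
    [DecidableEq β] (g : α → β) (hg : Function.Injective g) (c c' : α → ℝ) :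
    ∑ j : β, (∑ i : α, if g i = j then c i else 0) * (∑ i : α, if g i = j then c' i else 0)
      = ∑ i : α, c i * c' i := by
  calc ∑ j : β, (∑ i : α, if g i = j then c i else 0) * (∑ i : α, if g i = j then c' i else 0)
      = ∑ i : α, ∑ i' : α, ∑ j : β,
          (if g i = j then c i else 0) * (if g i' = j then c' i' else 0) := by
        simp_rw [Finset.sum_mul_sum]
        rw [Finset.sum_comm]
        exact Finset.sum_congr rfl fun i _ => Finset.sum_comm
    _ = ∑ i : α, c i * c' i := by
        simp [ite_mul, zero_mul, Finset.sum_ite_eq, mul_ite, mul_zero, hg.eq_iff,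
          Finset.sum_ite_eq']

/-- For `X ∈ ℝ^{n×n}` of rank at most `d`, the nuclear norm
`‖X‖_* = Σᵢ √(μᵢ)`, where `μᵢ` are the eigenvalues of `Xᵀ X`, equals the minimum of
`(1/2)(‖U‖_F² + ‖V‖_F²)` over all factorizations `X = U Vᵀ` with
`U, V ∈ ℝ^{n×d}`, and the minimum is attained. -/
theorem stmt_19 (n d : ℕ) (X : Matrix (Fin n) (Fin n) ℝ) (hrank : X.rank ≤ d) :
    IsLeast
      { c : ℝ | ∃ U V : Matrix (Fin n) (Fin d) ℝ, X = U * Vᵀ ∧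
          c = (1 / 2) * ((∑ i, ∑ j, (U i j) ^ 2) + (∑ i, ∑ j, (V i j) ^ 2)) }
      (∑ i, Real.sqrt
        ((show (Xᵀ * X).IsHermitian by
            simpa using Matrix.isHermitian_conjTranspose_mul_self X).eigenvalues i)) := by
  classical
  have hA : (Xᵀ * X).IsHermitian := by simpa using Matrix.isHermitian_conjTranspose_mul_self X
  set μ : Fin n → ℝ := hA.eigenvalues with hμdef
  set q : Fin n → Fin n → ℝ := fun i => ⇑(hA.eigenvectorBasis i) with hqdef
  have hQmem := (hA.eigenvectorUnitary).2
  rw [Matrix.mem_unitaryGroup_iff] at hQmem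
  have hQmem' := (hA.eigenvectorUnitary).2
  rw [Matrix.mem_unitaryGroup_iff'] at hQmem'
  -- completeness of the eigenvectors
  have hF4 : ∀ a b, (∑ i, q i a * q i b) = if a = b then (1:ℝ) else 0 := by
    intro a b
    have := congrFun (congrFun hQmem a) b
    simp only [Matrix.mul_apply, Matrix.star_apply, Matrix.one_apply] at this
    simpa [hqdef, mul_comm] using this
  -- orthonormality of the eigenvectors
  have hF2 : ∀ i j, (q i) ⬝ᵥ (q j) = if i = j then (1:ℝ) else 0 := by
    intro i j
    have := congrFun (congrFun hQmem' i) j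
    simp only [Matrix.mul_apply, Matrix.star_apply, Matrix.one_apply] at this
    simpa [hqdef, dotProduct, mul_comm] using this
  have hF3 : ∀ j, (Xᵀ * X) *ᵥ q j = μ j • q j := fun j => hA.mulVec_eigenvectorBasis j
  have hpsd : (Xᵀ * X).PosSemidef := by
    have := Matrix.posSemidef_conjTranspose_mul_self X
    rwa [Matrix.conjTranspose_eq_transpose_of_trivial] at this
  have hμ0 : ∀ i, 0 ≤ μ i := fun i => hpsd.eigenvalues_nonneg i
  -- the key inner products
  have hF5 : ∀ i j, (X *ᵥ q i) ⬝ᵥ (X *ᵥ q j) = if i = j then μ i else 0 := by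
    intro i j
    have h1 : (X *ᵥ q i) ⬝ᵥ (X *ᵥ q j) = (q i) ⬝ᵥ ((Xᵀ * X) *ᵥ q j) := by
      rw [← Matrix.mulVec_mulVec, Matrix.dotProduct_mulVec (q i), Matrix.vecMul_transpose]
    rw [h1, hF3, dotProduct_smul, hF2, smul_eq_mul]
    split_ifs with h
    · subst h; ring
    · ring
  have hzero : ∀ i, μ i = 0 → X *ᵥ q i = 0 := by
    intro i h0
    have := hF5 i i
    rw [if_pos rfl, h0] at this
    exact dotProduct_self_eq_zero.mp this
  set σ : Fin n → ℝ := fun i => Real.sqrt (μ i) with hσdef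
  have hσ0 : ∀ i, 0 ≤ σ i := fun i => Real.sqrt_nonneg _
  have hσsq : ∀ i, σ i * σ i = μ i := fun i => Real.mul_self_sqrt (hμ0 i)
  -- Parseval for the eigenvector basis
  have hParseval : ∀ x : Fin n → ℝ, ∑ i, (x ⬝ᵥ q i) ^ 2 = x ⬝ᵥ x := by
    intro x
    calc ∑ i, (x ⬝ᵥ q i) ^ 2
        = ∑ i, ∑ b, ∑ c, (x b * x c) * (q i b * q i c) := by
          simp_rw [pow_two, dotProduct, Finset.sum_mul_sum, mul_mul_mul_comm]
      _ = ∑ b, ∑ c, (x b * x c) * ∑ i, q i b * q i c := by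
          rw [Finset.sum_comm]
          refine Finset.sum_congr rfl fun b _ => ?_
          rw [Finset.sum_comm]
          simp_rw [← Finset.mul_sum]
      _ = x ⬝ᵥ x := by
          simp_rw [hF4]
          simp [dotProduct, mul_ite, mul_one, mul_zero, Finset.sum_ite_eq]
  have hsub : ∀ (f : Fin n → ℝ), (∀ i, μ i = 0 → f i = 0) →
      ∑ i : {i // μ i ≠ 0}, f ↑i = ∑ i, f i := by
    intro f hf
    rw [← Finset.sum_subtype (Finset.univ.filter (fun i => μ i ≠ 0)) (by simp) f]
    exact Finset.sum_filter_of_ne (fun x _ hx h0 => hx (hf x h0))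
  show IsLeast _ (∑ i, σ i)
  constructor
  · -- membership : construct a factorization attaining the value
    obtain ⟨g, hg⟩ : ∃ g : {i // μ i ≠ 0} → Fin d, Function.Injective g := by
      have h1 : Fintype.card {i // μ i ≠ 0} ≤ Fintype.card (Fin d) := by
        rw [Fintype.card_fin, ← hA.rank_eq_card_non_zero_eigs]
        exact (Matrix.rank_transpose_mul_self X).le.trans hrank
      obtain ⟨e⟩ := Function.Embedding.nonempty_of_card_le h1
      exact ⟨e, e.injective⟩
    have hσpos : ∀ i : {i // μ i ≠ 0}, 0 < σ ↑i := fun i =>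
      Real.sqrt_pos.mpr (lt_of_le_of_ne (hμ0 ↑i) (Ne.symm i.2))
    have hrσpos : ∀ i : {i // μ i ≠ 0}, 0 < Real.sqrt (σ ↑i) := fun i =>
      Real.sqrt_pos.mpr (hσpos i)
    refine ⟨fun a j => ∑ i : {i // μ i ≠ 0},
        if g i = j then (X *ᵥ q ↑i) a / Real.sqrt (σ ↑i) else 0,
      fun b j => ∑ i : {i // μ i ≠ 0},
        if g i = j then Real.sqrt (σ ↑i) * q ↑i b else 0, ?_, ?_⟩
    · -- X = U Vᵀ
      ext a b
      erw [Matrix.mul_apply]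
      show X a b = ∑ j, (∑ i : {i // μ i ≠ 0}, if g i = j then (X *ᵥ q ↑i) a / Real.sqrt (σ ↑i) else 0) *
        (∑ i : {i // μ i ≠ 0}, if g i = j then Real.sqrt (σ ↑i) * q ↑i b else 0)
      rw [aux_sum_ite_mul g hg]
      have hterm : ∀ i : {i // μ i ≠ 0},
          (X *ᵥ q ↑i) a / Real.sqrt (σ ↑i) * (Real.sqrt (σ ↑i) * q ↑i b)
            = (X *ᵥ q ↑i) a * q ↑i b := by
        intro i
        have hne : Real.sqrt (σ ↑i) ≠ 0 := (hrσpos i).ne'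
        rw [mul_comm (Real.sqrt (σ ↑i)) (q ↑i b), ← mul_assoc, div_mul_eq_mul_div,
          div_mul_cancel₀ _ hne]
      rw [Finset.sum_congr rfl fun i _ => hterm i]
      rw [show (∑ i : {i // μ i ≠ 0}, (X *ᵥ q ↑i) a * q ↑i b)
            = ∑ i, (X *ᵥ q i) a * q i b from
          hsub (fun i => (X *ᵥ q i) a * q i b)
            (fun i h0 => show (X *ᵥ q i) a * q i b = 0 by rw [hzero i h0]; simp)]
      -- now : X a b = ∑ i, (X *ᵥ q i) a * q i b
      calc X a b = ∑ c, X a c * ∑ i, q i c * q i b := by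
            simp_rw [hF4]
            simp [mul_ite, mul_one, mul_zero, Finset.sum_ite_eq']
        _ = ∑ c, ∑ i, X a c * (q i c * q i b) := by simp_rw [Finset.mul_sum]
        _ = ∑ i, ∑ c, X a c * (q i c * q i b) := Finset.sum_comm
        _ = ∑ i, (X *ᵥ q i) a * q i b := by
            simp only [Matrix.mulVec, dotProduct, Finset.sum_mul]
            exact Finset.sum_congr rfl fun i _ => Finset.sum_congr rfl fun c _ => by ring
    · -- the value
      have hUval : ∀ a, (∑ j, (∑ i : {i // μ i ≠ 0},
          if g i = j then (X *ᵥ q ↑i) a / Real.sqrt (σ ↑i) else 0) ^ 2)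
            = ∑ i : {i // μ i ≠ 0}, ((X *ᵥ q ↑i) a / Real.sqrt (σ ↑i)) ^ 2 := by
        intro a
        simp_rw [pow_two]
        exact aux_sum_ite_mul g hg _ _
      have hVval : ∀ b, (∑ j, (∑ i : {i // μ i ≠ 0},
          if g i = j then Real.sqrt (σ ↑i) * q ↑i b else 0) ^ 2)
            = ∑ i : {i // μ i ≠ 0}, (Real.sqrt (σ ↑i) * q ↑i b) ^ 2 := by
        intro b
        simp_rw [pow_two]
        exact aux_sum_ite_mul g hg _ _
      rw [Finset.sum_congr rfl fun a _ => hUval a, Finset.sum_congr rfl fun b _ => hVval b]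
      rw [show (∑ a : Fin n, ∑ i : {i // μ i ≠ 0}, ((X *ᵥ q ↑i) a / Real.sqrt (σ ↑i)) ^ 2)
            = ∑ i : {i // μ i ≠ 0}, ∑ a, ((X *ᵥ q ↑i) a / Real.sqrt (σ ↑i)) ^ 2 from
          Finset.sum_comm]
      rw [show (∑ b : Fin n, ∑ i : {i // μ i ≠ 0}, (Real.sqrt (σ ↑i) * q ↑i b) ^ 2)
            = ∑ i : {i // μ i ≠ 0}, ∑ b, (Real.sqrt (σ ↑i) * q ↑i b) ^ 2 from
          Finset.sum_comm]
      have hU2 : ∀ i : {i // μ i ≠ 0},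
          ∑ a, ((X *ᵥ q ↑i) a / Real.sqrt (σ ↑i)) ^ 2 = σ ↑i := by
        intro i
        have h1 : ∑ a, ((X *ᵥ q ↑i) a / Real.sqrt (σ ↑i)) ^ 2
            = (∑ a, (X *ᵥ q ↑i) a * (X *ᵥ q ↑i) a) / σ ↑i := by
          rw [Finset.sum_div]
          refine Finset.sum_congr rfl fun a _ => ?_
          rw [div_pow, Real.sq_sqrt (hσpos i).le, pow_two]
        have h2 : (∑ a, (X *ᵥ q ↑i) a * (X *ᵥ q ↑i) a) = μ ↑i := by
          have := hF5 ↑i ↑i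
          rw [if_pos rfl] at this
          exact this
        rw [h1, h2, ← hσsq ↑i, mul_div_assoc, div_self (hσpos i).ne', mul_one]
      have hV2 : ∀ i : {i // μ i ≠ 0},
          ∑ b, (Real.sqrt (σ ↑i) * q ↑i b) ^ 2 = σ ↑i := by
        intro i
        have h1 : ∑ b, (Real.sqrt (σ ↑i) * q ↑i b) ^ 2
            = σ ↑i * ∑ b, q ↑i b * q ↑i b := by
          rw [Finset.mul_sum]
          refine Finset.sum_congr rfl fun b _ => ?_
          rw [mul_pow, Real.sq_sqrt (hσpos i).le, pow_two]
        have h2 : (∑ b, q ↑i b * q ↑i b) = 1 := by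
          have := hF2 ↑i ↑i
          rw [if_pos rfl] at this
          exact this
        rw [h1, h2, mul_one]
      rw [Finset.sum_congr rfl fun i _ => hU2 i, Finset.sum_congr rfl fun i _ => hV2 i]
      rw [show (∑ i : {i // μ i ≠ 0}, σ ↑i) = ∑ i, σ i from
        hsub (fun i => σ i) (fun i h0 => by rw [hσdef]; simp [h0])]
      ring
  · -- lower bound
    rintro c ⟨U, V, hXUV, rfl⟩
    set u : Fin n → Fin n → ℝ := fun i => if μ i = 0 then 0 else (σ i)⁻¹ • (X *ᵥ q i)
      with hudef
    have hu : ∀ i j, (u i) ⬝ᵥ (u j) = if i = j then (if μ i = 0 then 0 else 1) else 0 := by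
      intro i j
      by_cases h0i : μ i = 0
      · simp [hudef, h0i, zero_dotProduct]
      by_cases h0j : μ j = 0
      · have hij : i ≠ j := fun h => h0i (h ▸ h0j)
        simp [hudef, h0i, h0j, hij, dotProduct_zero]
      · simp only [hudef, if_neg h0i, if_neg h0j]
        rw [smul_dotProduct, dotProduct_smul, hF5, smul_eq_mul, smul_eq_mul]
        split_ifs with h
        · subst h
          rw [← hσsq i]
          have hσne : σ i ≠ 0 := fun hz => h0i (by rw [← hσsq i, hz, mul_zero])
          field_simp
        · ring
    have huz : ∀ i, μ i = 0 → u i = 0 := fun i h0 => by simp [hudef, h0]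
    have hdot_sum : ∀ (f : Fin n → Fin n → ℝ) (x : Fin n → ℝ),
        x ⬝ᵥ (∑ i, f i) = ∑ i, x ⬝ᵥ f i := by
      intro f x
      simp only [dotProduct, Finset.sum_apply, Finset.mul_sum]
      exact Finset.sum_comm
    have hsum_dot : ∀ (f : Fin n → Fin n → ℝ) (x : Fin n → ℝ),
        (∑ i, f i) ⬝ᵥ x = ∑ i, f i ⬝ᵥ x := by
      intro f x
      simp only [dotProduct, Finset.sum_apply, Finset.sum_mul]
      exact Finset.sum_comm
    -- Bessel's inequality for the family u
    have hbessel : ∀ x : Fin n → ℝ, ∑ i, (x ⬝ᵥ u i) ^ 2 ≤ x ⬝ᵥ x := by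
      intro x
      set s : Fin n → ℝ := ∑ i, (x ⬝ᵥ u i) • u i with hsdef
      have hnn : (0:ℝ) ≤ (x - s) ⬝ᵥ (x - s) :=
        Finset.sum_nonneg fun i _ => mul_self_nonneg _
      have hxs : x ⬝ᵥ s = ∑ i, (x ⬝ᵥ u i) ^ 2 := by
        rw [hsdef, hdot_sum]
        refine Finset.sum_congr rfl fun i _ => ?_
        rw [dotProduct_smul, smul_eq_mul, pow_two]
      have hss : s ⬝ᵥ s = ∑ i, (x ⬝ᵥ u i) ^ 2 := by
        rw [hsdef, hsum_dot]
        refine Finset.sum_congr rfl fun i _ => ?_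
        rw [smul_dotProduct, hdot_sum, smul_eq_mul]
        have hinner : ∑ j, (u i) ⬝ᵥ ((x ⬝ᵥ u j) • u j) = (x ⬝ᵥ u i) := by
          have : ∀ j, (u i) ⬝ᵥ ((x ⬝ᵥ u j) • u j) = (x ⬝ᵥ u j) * ((u i) ⬝ᵥ (u j)) := by
            intro j; rw [dotProduct_smul, smul_eq_mul]
          rw [Finset.sum_congr rfl fun j _ => this j]
          simp_rw [hu]
          rw [Finset.sum_eq_single i (fun j _ hj => by
            rw [if_neg (fun h => hj h.symm), mul_zero]) (by simp)]
          rw [if_pos rfl]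
          by_cases h0 : μ i = 0
          · rw [if_pos h0, mul_zero, huz i h0, dotProduct_zero]
          · rw [if_neg h0, mul_one]
        rw [hinner, pow_two]
      have hexp : (x - s) ⬝ᵥ (x - s) = x ⬝ᵥ x - ∑ i, (x ⬝ᵥ u i) ^ 2 := by
        rw [sub_dotProduct, dotProduct_sub, dotProduct_sub,
          dotProduct_comm s x, hxs, hss]
        ring
      rw [hexp] at hnn
      linarith
    -- pointwise bound : σ i ≤ half sum of squares
    have hhalf : ∀ (a b : Fin d → ℝ), a ⬝ᵥ b ≤ (1/2) * ((∑ j, a j ^ 2) + (∑ j, b j ^ 2)) := by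
      intro a b
      have h1 : ∀ j, a j * b j ≤ (a j ^ 2 + b j ^ 2) / 2 := fun j => by
        nlinarith [sq_nonneg (a j - b j)]
      calc a ⬝ᵥ b = ∑ j, a j * b j := rfl
        _ ≤ ∑ j, (a j ^ 2 + b j ^ 2) / 2 := Finset.sum_le_sum fun j _ => h1 j
        _ = (1/2) * ((∑ j, a j ^ 2) + (∑ j, b j ^ 2)) := by
            rw [← Finset.sum_div, Finset.sum_add_distrib]
            ring
    have key : ∀ i, σ i ≤ (1/2) * ((∑ j, ((Uᵀ *ᵥ u i) j) ^ 2) + (∑ j, ((Vᵀ *ᵥ q i) j) ^ 2)) := by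
      intro i
      by_cases h0 : μ i = 0
      · have hσz : σ i = 0 := by rw [hσdef]; simp [h0]
        rw [hσz]
        have : (0:ℝ) ≤ (1/2) * ((∑ j, ((Uᵀ *ᵥ u i) j) ^ 2) + (∑ j, ((Vᵀ *ᵥ q i) j) ^ 2)) := by
          positivity
        exact this
      · have hσne : σ i ≠ 0 := fun hz => h0 (by rw [← hσsq i, hz, mul_zero])
        have h1 : σ i = (u i) ⬝ᵥ (X *ᵥ q i) := by
          simp only [hudef, if_neg h0]
          rw [smul_dotProduct, smul_eq_mul]
          have := hF5 i i
          rw [if_pos rfl] at this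
          rw [this, ← hσsq i]
          field_simp
        have h2 : (u i) ⬝ᵥ (X *ᵥ q i) = (Uᵀ *ᵥ u i) ⬝ᵥ (Vᵀ *ᵥ q i) := by
          rw [hXUV, ← Matrix.mulVec_mulVec, Matrix.dotProduct_mulVec, ← Matrix.mulVec_transpose]
        rw [h1, h2]
        exact hhalf _ _
    have hUbd : ∑ i, ∑ j, ((Uᵀ *ᵥ u i) j) ^ 2 ≤ ∑ a, ∑ j, U a j ^ 2 := by
      rw [Finset.sum_comm]
      have h1 : ∀ j, ∑ i, ((Uᵀ *ᵥ u i) j) ^ 2 ≤ ∑ a, U a j ^ 2 := by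
        intro j
        have h2 : ∀ i, (Uᵀ *ᵥ u i) j = (fun a => U a j) ⬝ᵥ u i := by
          intro i
          simp [Matrix.mulVec, dotProduct, Matrix.transpose_apply]
        rw [Finset.sum_congr rfl fun i _ => by rw [h2 i]]
        have := hbessel (fun a => U a j)
        calc ∑ i, ((fun a => U a j) ⬝ᵥ u i) ^ 2 ≤ (fun a => U a j) ⬝ᵥ (fun a => U a j) := this
          _ = ∑ a, U a j ^ 2 := by simp [dotProduct, pow_two]
      calc ∑ j, ∑ i, ((Uᵀ *ᵥ u i) j) ^ 2 ≤ ∑ j, ∑ a, U a j ^ 2 :=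
            Finset.sum_le_sum fun j _ => h1 j
        _ = ∑ a, ∑ j, U a j ^ 2 := Finset.sum_comm
    have hVbd : ∑ i, ∑ j, ((Vᵀ *ᵥ q i) j) ^ 2 = ∑ b, ∑ j, V b j ^ 2 := by
      rw [Finset.sum_comm]
      have h1 : ∀ j, ∑ i, ((Vᵀ *ᵥ q i) j) ^ 2 = ∑ b, V b j ^ 2 := by
        intro j
        have h2 : ∀ i, (Vᵀ *ᵥ q i) j = (fun b => V b j) ⬝ᵥ q i := by
          intro i
          simp [Matrix.mulVec, dotProduct, Matrix.transpose_apply]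
        rw [Finset.sum_congr rfl fun i _ => by rw [h2 i]]
        rw [hParseval (fun b => V b j)]
        simp [dotProduct, pow_two]
      rw [Finset.sum_congr rfl fun j _ => h1 j]
      exact Finset.sum_comm
    calc ∑ i, σ i
        ≤ ∑ i, (1/2) * ((∑ j, ((Uᵀ *ᵥ u i) j) ^ 2) + (∑ j, ((Vᵀ *ᵥ q i) j) ^ 2)) :=
          Finset.sum_le_sum fun i _ => key i
      _ = (1/2) * ((∑ i, ∑ j, ((Uᵀ *ᵥ u i) j) ^ 2) + (∑ i, ∑ j, ((Vᵀ *ᵥ q i) j) ^ 2)) := by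
          rw [← Finset.mul_sum, Finset.sum_add_distrib]
      _ ≤ (1/2) * ((∑ a, ∑ j, U a j ^ 2) + (∑ b, ∑ j, V b j ^ 2)) := by
          have := hVbd
          nlinarith [hUbd]
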